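/- Let d ≥ 1 and m ≥ 1, let C be a symmetric positive definite m×m real matrix, and let v ∈ ℝ^m be a vector such that D := v vᵀ ⪯ C (i.e. C − vvᵀ is positive semidefinite). Let B be the (dm)×(dm) block matrix whose d diagonal blocks all equal C and whose off-diagonal blocks all equal D. Then, denoting by λ₁(B) ≤ ⋯ ≤ λ_{dm}(B) the eigenvalues of B in increasing order and by λ_min(C), λ_max(C) the extreme eigenvalues of C, one has λ_{dm}(B) ≤ d · λ_max(C) and λ_d(B) ≥ λ_min(C); consequently λ_{dm}(B)/λ_d(B) ≤ d · λ_max(C)/λ_min(C). -/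

import Mathlib

open Matrix Finset

section auxKAN

variable {n : Type*} [Fintype n] [DecidableEq n]

private lemma ray_decomp18 (A : Matrix n n ℝ) (hA : A.IsHermitian) (y : n → ℝ) :
    (y ⬝ᵥ A *ᵥ y = ∑ k, hA.eigenvalues k * ((star (hA.eigenvectorUnitary : Matrix n n ℝ) *ᵥ y) k) ^ 2)
    ∧ y ⬝ᵥ y = ∑ k, ((star (hA.eigenvectorUnitary : Matrix n n ℝ) *ᵥ y) k) ^ 2 := by
  set U := (hA.eigenvectorUnitary : Matrix n n ℝ) with hU
  set z := star U *ᵥ y with hz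
  have hsU : star U = Uᵀ := by
    rw [star_eq_conjTranspose, conjTranspose_eq_transpose_of_trivial]
  have hUU : U * star U = 1 := (Matrix.mem_unitaryGroup_iff).mp hA.eigenvectorUnitary.2
  have hUz : U *ᵥ z = y := by
    rw [hz, mulVec_mulVec, hUU, one_mulVec]
  have hyy : y ⬝ᵥ y = ∑ k, (z k) ^ 2 := by
    conv_lhs => rw [← hUz]
    rw [dotProduct_mulVec, ← mulVec_transpose, ← hsU, hz, mulVec_mulVec, mulVec_mulVec,
      mul_assoc, hUU, mul_one]
    simp [dotProduct, sq]
  refine ⟨?_, hyy⟩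
  conv_lhs => rw [hA.spectral_theorem, Unitary.conjStarAlgAut_apply]
  rw [← hU, mul_assoc, ← mulVec_mulVec, ← mulVec_mulVec, dotProduct_mulVec, ← mulVec_transpose,
    ← hsU, ← hz]
  simp only [dotProduct, mulVec_diagonal, Function.comp_apply, RCLike.ofReal_real_eq_id, id_eq]
  exact Finset.sum_congr rfl fun k _ => by ring

private lemma rayleigh_le18 (A : Matrix n n ℝ) (hA : A.IsHermitian) (y : n → ℝ) {c : ℝ}
    (h : ∀ k, hA.eigenvalues k ≤ c) : y ⬝ᵥ A *ᵥ y ≤ c * (y ⬝ᵥ y) := by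
  obtain ⟨h1, h2⟩ := ray_decomp18 A hA y
  rw [h1, h2, Finset.mul_sum]
  exact Finset.sum_le_sum fun k _ => mul_le_mul_of_nonneg_right (h k) (sq_nonneg _)

private lemma rayleigh_ge18 (A : Matrix n n ℝ) (hA : A.IsHermitian) (y : n → ℝ) {c : ℝ}
    (h : ∀ k, c ≤ hA.eigenvalues k) : c * (y ⬝ᵥ y) ≤ y ⬝ᵥ A *ᵥ y := by
  obtain ⟨h1, h2⟩ := ray_decomp18 A hA y
  rw [h1, h2, Finset.mul_sum]
  exact Finset.sum_le_sum fun k _ => mul_le_mul_of_nonneg_right (h k) (sq_nonneg _)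

private lemma evb_dot18 (A : Matrix n n ℝ) (hA : A.IsHermitian) (i j : n) :
    (⇑(hA.eigenvectorBasis i)) ⬝ᵥ (⇑(hA.eigenvectorBasis j)) = if i = j then 1 else 0 := by
  have := orthonormal_iff_ite.mp hA.eigenvectorBasis.orthonormal i j
  rw [EuclideanSpace.inner_eq_star_dotProduct] at this
  rw [dotProduct_comm]
  simpa [RCLike.inner_apply] using this

private lemma dot_sums18 {N ι : Type*} [Fintype N] [Fintype ι] [DecidableEq ι]
    (u : ι → N → ℝ) (ho : ∀ k l, u k ⬝ᵥ u l = if k = l then 1 else 0) (c f : ι → ℝ) :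
    (fun p => ∑ k, c k * u k p) ⬝ᵥ (fun p => ∑ l, f l * u l p) = ∑ k, c k * f k := by
  simp only [dotProduct, Finset.sum_mul, Finset.mul_sum]
  rw [Finset.sum_comm]
  have step : ∀ l, ∑ p, ∑ k, (c k * u k p) * (f l * u l p) = ∑ k, (c k * f l) * (u k ⬝ᵥ u l) := by
    intro l
    rw [Finset.sum_comm]
    refine Finset.sum_congr rfl fun k _ => ?_
    simp only [dotProduct, Finset.mul_sum]
    exact Finset.sum_congr rfl fun p _ => by ring
  rw [Finset.sum_congr rfl fun l _ => step l]
  simp only [ho, mul_ite, mul_one, mul_zero]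
  rw [Finset.sum_comm]
  simp [Finset.sum_ite_eq]

end auxKAN

private lemma sum_ite_diag18 {d : ℕ} (A s : Fin d → ℝ) :
    ∑ i, ∑ j, (if i = j then A i else s i * s j)
      = (∑ i, A i) - (∑ i, (s i)^2) + (∑ i, s i)^2 := by
  have h1 : ∀ i : Fin d, ∑ j, (if i = j then A i else s i * s j)
      = (A i - s i * s i) + s i * ∑ j, s j := by
    intro i
    have : ∀ j : Fin d, (if i = j then A i else s i * s j)
        = (if i = j then A i - s i * s i else 0) + s i * s j := by
      intro j; by_cases h : i = j <;> simp [h]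
    rw [Finset.sum_congr rfl fun j _ => this j, Finset.sum_add_distrib,
      Finset.sum_ite_eq, ← Finset.mul_sum]
    simp
  rw [Finset.sum_congr rfl fun i _ => h1 i, Finset.sum_add_distrib, Finset.sum_sub_distrib,
    ← Finset.sum_mul]
  ring_nf

private lemma blockform18 {d m : ℕ} (C : Matrix (Fin m) (Fin m) ℝ) (v : Fin m → ℝ)
    (B : Matrix (Fin d × Fin m) (Fin d × Fin m) ℝ)
    (hBdef : ∀ (i j : Fin d) (a b : Fin m),
      B (i, a) (j, b) = if i = j then C a b else v a * v b)
    (x : Fin d × Fin m → ℝ) :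
    x ⬝ᵥ B *ᵥ x = (∑ i, (fun a => x (i,a)) ⬝ᵥ C *ᵥ (fun a => x (i,a)))
      - (∑ i, ((v ⬝ᵥ fun a => x (i,a)))^2) + (∑ i, (v ⬝ᵥ fun a => x (i,a)))^2 := by
  have key : x ⬝ᵥ B *ᵥ x = ∑ i : Fin d, ∑ j : Fin d,
      (if i = j then (fun a => x (i,a)) ⬝ᵥ C *ᵥ (fun a => x (i,a))
       else (v ⬝ᵥ fun a => x (i,a)) * (v ⬝ᵥ fun a => x (j,a))) := by
    simp only [dotProduct, mulVec, Finset.mul_sum]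
    rw [Fintype.sum_prod_type]
    refine Finset.sum_congr rfl fun i _ => ?_
    have : ∀ a : Fin m, ∑ q : Fin d × Fin m, x (i,a) * (B (i,a) q * x q)
        = ∑ j : Fin d, ∑ b : Fin m, x (i,a) * ((if i = j then C a b else v a * v b) * x (j,b)) := by
      intro a
      rw [Fintype.sum_prod_type]
      exact Finset.sum_congr rfl fun j _ => Finset.sum_congr rfl fun b _ => by rw [hBdef]
    rw [Finset.sum_congr rfl fun a _ => this a, Finset.sum_comm]
    refine Finset.sum_congr rfl fun j _ => ?_
    by_cases h : i = j
    · subst h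
      simp only [if_pos rfl, dotProduct, mulVec, Finset.mul_sum]
      refine Finset.sum_congr rfl fun a _ => Finset.sum_congr rfl fun b _ => ?_
      simp only [eq_self_iff_true, if_true]
    · simp only [if_neg h, dotProduct, Finset.sum_mul, Finset.mul_sum]
      rw [Finset.sum_comm]
      exact Finset.sum_congr rfl fun a _ => Finset.sum_congr rfl fun b _ => by ring
  rw [key, ← sum_ite_diag18]

theorem stmt18 (d m : ℕ) (hd : 1 ≤ d) (hm : 1 ≤ m)
    (C : Matrix (Fin m) (Fin m) ℝ) (hCpd : C.PosDef)
    (v : Fin m → ℝ)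
    (hDC : (C - Matrix.of fun a b => v a * v b).PosSemidef)
    (B : Matrix (Fin d × Fin m) (Fin d × Fin m) ℝ) (hB : B.IsHermitian)
    (hBdef : ∀ (i j : Fin d) (a b : Fin m),
      B (i, a) (j, b) = if i = j then C a b else v a * v b)
    (eigB : Fin (d * m) → ℝ) (e : Fin (d * m) ≃ Fin d × Fin m)
    (heigB : ∀ i, eigB i = hB.eigenvalues (e i)) (hmono : Monotone eigB)
    (lmin lmax : ℝ)
    (hlmin : IsLeast (Set.range hCpd.isHermitian.eigenvalues) lmin)
    (hlmax : IsGreatest (Set.range hCpd.isHermitian.eigenvalues) lmax)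
    (top dth : Fin (d * m)) (htop : (top : ℕ) = d * m - 1) (hdth : (dth : ℕ) = d - 1) :
    eigB top ≤ d * lmax ∧ lmin ≤ eigB dth ∧
      eigB top / eigB dth ≤ d * lmax / lmin := by
  have hd1 : (1:ℝ) ≤ (d:ℝ) := by exact_mod_cast hd
  obtain ⟨kmin, hkmin⟩ := hlmin.1
  have hlminpos : 0 < lmin := by rw [← hkmin]; exact hCpd.eigenvalues_pos kmin
  have hlmaxpos : 0 < lmax := lt_of_lt_of_le hlminpos (hlmax.2 hlmin.1)
  have hCeigle : ∀ k, hCpd.isHermitian.eigenvalues k ≤ lmax := fun k => hlmax.2 ⟨k, rfl⟩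
  have hCeigge : ∀ k, lmin ≤ hCpd.isHermitian.eigenvalues k := fun k => hlmin.2 ⟨k, rfl⟩
  -- quadratic form of D
  have hDquad : ∀ y : Fin m → ℝ, (v ⬝ᵥ y)^2 ≤ y ⬝ᵥ C *ᵥ y := by
    intro y
    have h0 := hDC.dotProduct_mulVec_nonneg y
    rw [star_trivial, sub_mulVec, dotProduct_sub] at h0
    have hD : y ⬝ᵥ (Matrix.of fun a b => v a * v b) *ᵥ y = (v ⬝ᵥ y)^2 := by
      have h1 : y ⬝ᵥ (Matrix.of fun a b => v a * v b) *ᵥ y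
          = (∑ a, y a * v a) * (∑ b, v b * y b) := by
        simp only [dotProduct, mulVec, Matrix.of_apply, Finset.sum_mul]
        refine Finset.sum_congr rfl fun a _ => ?_
        simp only [dotProduct, Finset.mul_sum]
        exact Finset.sum_congr rfl fun b _ => by ring
      rw [h1]
      simp only [dotProduct, sq]
      congr 1
      exact Finset.sum_congr rfl fun a _ => by ring
    linarith
  -- quadratic form bounds for B
  have upper : ∀ x : Fin d × Fin m → ℝ, x ⬝ᵥ B *ᵥ x ≤ ((d:ℝ) * lmax) * (x ⬝ᵥ x) := by
    intro x
    have hxx : x ⬝ᵥ x = ∑ i : Fin d, ((fun a => x (i,a)) ⬝ᵥ (fun a => x (i,a))) := by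
      simp only [dotProduct]
      rw [Fintype.sum_prod_type]
    rw [blockform18 C v B hBdef x, hxx]
    have e2 : ∑ i : Fin d, (fun a => x (i,a)) ⬝ᵥ C *ᵥ (fun a => x (i,a))
        ≤ lmax * ∑ i : Fin d, ((fun a => x (i,a)) ⬝ᵥ (fun a => x (i,a))) := by
      rw [Finset.mul_sum]
      exact Finset.sum_le_sum fun i _ => rayleigh_le18 C hCpd.isHermitian _ hCeigle
    have e3 : ∑ i : Fin d, ((v ⬝ᵥ fun a => x (i,a)))^2
        ≤ ∑ i : Fin d, (fun a => x (i,a)) ⬝ᵥ C *ᵥ (fun a => x (i,a)) :=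
      Finset.sum_le_sum fun i _ => hDquad _
    have e4 : (∑ i : Fin d, (v ⬝ᵥ fun a => x (i,a)))^2
        ≤ (d:ℝ) * ∑ i : Fin d, ((v ⬝ᵥ fun a => x (i,a)))^2 := by
      have := sq_sum_le_card_mul_sum_sq (s := (Finset.univ : Finset (Fin d)))
        (f := fun i => v ⬝ᵥ fun a => x (i,a))
      simpa using this
    have e5 := mul_le_mul_of_nonneg_left e3 (show (0:ℝ) ≤ (d:ℝ) - 1 by linarith)
    have e6 := mul_le_mul_of_nonneg_left e2 (show (0:ℝ) ≤ (d:ℝ) by linarith)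
    nlinarith [e4, e5, e6, e3]
  have lower : ∀ x : Fin d × Fin m → ℝ,
      (∀ i : Fin d, (v ⬝ᵥ fun a => x (i,a)) = (v ⬝ᵥ fun a => x ((⟨0, hd⟩ : Fin d), a))) →
      lmin * (x ⬝ᵥ x) ≤ x ⬝ᵥ B *ᵥ x := by
    intro x hall
    have hxx : x ⬝ᵥ x = ∑ i : Fin d, ((fun a => x (i,a)) ⬝ᵥ (fun a => x (i,a))) := by
      simp only [dotProduct]
      rw [Fintype.sum_prod_type]
    rw [blockform18 C v B hBdef x, hxx]
    set c0 : ℝ := v ⬝ᵥ fun a => x ((⟨0, hd⟩ : Fin d), a) with hc0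
    have hs1 : ∑ i : Fin d, (v ⬝ᵥ fun a => x (i,a)) = (d:ℝ) * c0 := by
      rw [Finset.sum_congr rfl fun i _ => hall i]
      simp [Finset.card_univ, mul_comm]
    have hs2 : ∑ i : Fin d, ((v ⬝ᵥ fun a => x (i,a)))^2 = (d:ℝ) * c0^2 := by
      rw [Finset.sum_congr rfl fun i _ => by rw [hall i]]
      simp [Finset.card_univ, mul_comm]
    have e2 : lmin * ∑ i : Fin d, ((fun a => x (i,a)) ⬝ᵥ (fun a => x (i,a)))
        ≤ ∑ i : Fin d, (fun a => x (i,a)) ⬝ᵥ C *ᵥ (fun a => x (i,a)) := by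
      rw [Finset.mul_sum]
      exact Finset.sum_le_sum fun i _ => rayleigh_ge18 C hCpd.isHermitian _ hCeigge
    rw [hs1, hs2]
    nlinarith [sq_nonneg c0, mul_nonneg (mul_nonneg (by linarith : (0:ℝ) ≤ (d:ℝ))
      (by linarith : (0:ℝ) ≤ (d:ℝ) - 1)) (sq_nonneg c0)]
  -- Part 1
  have part1 : eigB top ≤ (d:ℝ) * lmax := by
    set u : Fin d × Fin m → ℝ := ⇑(hB.eigenvectorBasis (e top)) with hu
    have huu : u ⬝ᵥ u = 1 := by
      have := evb_dot18 B hB (e top) (e top)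
      simpa using this
    have hBu : u ⬝ᵥ B *ᵥ u = eigB top := by
      rw [hu, hB.mulVec_eigenvectorBasis, ← heigB]
      simp only [dotProduct, Pi.smul_apply, smul_eq_mul]
      rw [show ∑ p, u p * (eigB top * u p) = eigB top * (u ⬝ᵥ u) by
        simp only [dotProduct, Finset.mul_sum]; exact Finset.sum_congr rfl fun p _ => by ring]
      rw [huu, mul_one]
    have := upper u
    rw [hBu, huu, mul_one] at this
    exact this
  -- Part 2
  have hdm : d ≤ d * m := Nat.le_mul_of_pos_right d (by omega)
  have part2 : lmin ≤ eigB dth := by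
    by_contra hcon
    push_neg at hcon
    set k : Fin d → Fin (d * m) := fun i => ⟨i.1, lt_of_lt_of_le i.2 hdm⟩ with hk
    have hkinj : Function.Injective k := by
      intro i j hij
      have h2 := congrArg Fin.val hij
      simp only [hk] at h2
      exact Fin.ext h2
    have hkle : ∀ i, k i ≤ dth := by
      intro i
      rw [Fin.le_def, hdth]
      have := i.2
      simp only [hk]
      omega
    set μ : Fin d → ℝ := fun i => eigB (k i) with hμdef
    have hμ : ∀ i, μ i < lmin := fun i => lt_of_le_of_lt (hmono (hkle i)) hcon
    set u : Fin d → Fin d × Fin m → ℝ := fun i => ⇑(hB.eigenvectorBasis (e (k i))) with hudef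
    have hudot : ∀ i j, u i ⬝ᵥ u j = if i = j then 1 else 0 := by
      intro i j
      rw [hudef]
      simp only
      rw [evb_dot18 B hB (e (k i)) (e (k j))]
      by_cases h : i = j
      · simp [h]
      · rw [if_neg h, if_neg]
        intro hcontra
        exact h (hkinj (e.injective hcontra))
    have hBu : ∀ i, B *ᵥ u i = μ i • u i := by
      intro i
      rw [hudef, hμdef]
      simp only
      rw [hB.mulVec_eigenvectorBasis, heigB]
    -- linear constraints
    set w : Fin d → Fin d → ℝ := fun l i => v ⬝ᵥ fun a => u l (i, a) with hwdef
    set i0 : Fin d := ⟨0, hd⟩ with hi0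
    let T : (Fin d → ℝ) →ₗ[ℝ] (Fin (d-1) → ℝ) :=
      { toFun := fun c j => ∑ l, c l * (w l ⟨j.1+1, by omega⟩ - w l i0),
        map_add' := by
          intro a b; funext j
          simp only [Pi.add_apply, add_mul]
          rw [Finset.sum_add_distrib]
        map_smul' := by
          intro r a; funext j
          simp only [Pi.smul_apply, smul_eq_mul, RingHom.id_apply, Finset.mul_sum]
          exact Finset.sum_congr rfl fun l _ => by ring }
    have hrank : Module.finrank ℝ (Fin (d-1) → ℝ) < Module.finrank ℝ (Fin d → ℝ) := by
      simp only [Module.finrank_pi, Fintype.card_fin]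
      omega
    have hker : LinearMap.ker T ≠ ⊥ := LinearMap.ker_ne_bot_of_finrank_lt hrank
    obtain ⟨c, hcker, hc0⟩ := Submodule.exists_mem_ne_zero_of_ne_bot hker
    set x : Fin d × Fin m → ℝ := fun p => ∑ l, c l * u l p with hx
    -- sigma is linear
    have hσ : ∀ i : Fin d, (v ⬝ᵥ fun a => x (i,a)) = ∑ l, c l * w l i := by
      intro i
      rw [hx, hwdef]
      simp only [dotProduct, Finset.mul_sum]
      rw [Finset.sum_comm]
      exact Finset.sum_congr rfl fun l _ => Finset.sum_congr rfl fun a _ => by ring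
    have hall : ∀ i : Fin d, (v ⬝ᵥ fun a => x (i,a)) = (v ⬝ᵥ fun a => x (i0, a)) := by
      intro i
      rcases Nat.eq_zero_or_pos i.1 with h0 | hpos
      · have : i = i0 := Fin.ext h0
        rw [this]
      · have hTc : T c = 0 := (LinearMap.mem_ker).mp hcker
        have := congrFun hTc ⟨i.1 - 1, by omega⟩
        simp only [Pi.zero_apply] at this
        have hi : (⟨(i.1 - 1) + 1, by omega⟩ : Fin d) = i :=
          Fin.ext (by show i.1 - 1 + 1 = i.1; omega)
        rw [hσ i, hσ i0]
        have hexp : ∑ l, c l * (w l i - w l i0) = 0 := by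
          rw [← hi]; exact this
        have : ∑ l, (c l * w l i - c l * w l i0) = 0 := by
          rw [← hexp]; exact Finset.sum_congr rfl fun l _ => by ring
        rw [Finset.sum_sub_distrib] at this
        linarith
    -- quadratic form of x
    have hxx2 : x ⬝ᵥ x = ∑ l, (c l)^2 := by
      rw [hx, dot_sums18 u hudot c c]
      exact Finset.sum_congr rfl fun l _ => (sq (c l)).symm
    have hxBx : x ⬝ᵥ B *ᵥ x = ∑ l, (c l)^2 * μ l := by
      have hmv : B *ᵥ x = fun p => ∑ l, (c l * μ l) * u l p := by
        funext p
        rw [hx]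
        simp only [mulVec, dotProduct, Finset.mul_sum]
        rw [Finset.sum_comm]
        refine Finset.sum_congr rfl fun l _ => ?_
        have h1 := congrFun (hBu l) p
        simp only [mulVec, dotProduct, Pi.smul_apply, smul_eq_mul] at h1
        calc ∑ q, B p q * (c l * u l q) = c l * ∑ q, B p q * u l q := by
              rw [Finset.mul_sum]; exact Finset.sum_congr rfl fun q _ => by ring
          _ = (c l * μ l) * u l p := by rw [h1]; ring
      rw [hx, hmv, dot_sums18 u hudot c (fun l => c l * μ l)]
      exact Finset.sum_congr rfl fun l _ => by ring
    have hlow := lower x hall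
    rw [hxx2, hxBx] at hlow
    have hstrict : ∑ l, (c l)^2 * μ l < lmin * ∑ l, (c l)^2 := by
      rw [Finset.mul_sum]
      obtain ⟨l0, hl0⟩ := Function.ne_iff.mp hc0
      refine Finset.sum_lt_sum (fun l _ => ?_) ⟨l0, Finset.mem_univ l0, ?_⟩
      · rw [mul_comm]
        exact mul_le_mul_of_nonneg_right (le_of_lt (hμ l)) (sq_nonneg _)
      · rw [mul_comm (lmin)]
        exact mul_lt_mul_of_pos_left (hμ l0) (pow_two_pos_of_ne_zero (by simpa using hl0))
    linarith
  -- Part 3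
  refine ⟨part1, part2, ?_⟩
  have hdthtop : dth ≤ top := by
    rw [Fin.le_def, htop, hdth]
    omega
  exact div_le_div₀ (by positivity) part1 hlminpos part2
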